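/- arXiv:1609.08645 — 5 statements merged into one kernel-verified Lean document; each statement's English description precedes it below -/
import Mathlib

section
/- Let G be a claw-free graph with a vertex v whose neighborhood does not induce a clique in the square of G \ v. Then the neighborhood of v in G can be covered by two cliques of G. -/
open SimpleGraph Finset

variable {V : Type*}

/-- A graph is claw-free if it has no induced `K_{1,3}`. -/
def ClawFree (G : SimpleGraph V) : Prop :=
  ∀ v a b c : V, G.Adj v a → G.Adj v b → G.Adj v c →
    a ≠ b → a ≠ c → b ≠ c → G.Adj a b ∨ G.Adj a c ∨ G.Adj b c

/-- The square of a graph: join distinct vertices at distance at most 2. -/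
def square (G : SimpleGraph V) : SimpleGraph V where
  Adj u w := u ≠ w ∧ (G.Adj u w ∨ ∃ x, G.Adj u x ∧ G.Adj x w)
  symm := ⟨by
    rintro u w ⟨h1, h2⟩
    refine ⟨h1.symm, ?_⟩
    rcases h2 with h | ⟨x, hx1, hx2⟩
    · exact Or.inl h.symm
    · exact Or.inr ⟨x, hx2.symm, hx1.symm⟩⟩
  loopless := ⟨fun u h => h.1 rfl⟩

/-- The second neighbourhood of `v` : vertices at distance exactly two from `v`. -/
def secondNbhd (G : SimpleGraph V) (v : V) : Set V :=
  {w | w ≠ v ∧ ¬G.Adj v w ∧ ∃ x, G.Adj v x ∧ G.Adj x w}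

/-- The square degree of a vertex. -/
noncomputable def sqDeg (G : SimpleGraph V) (v : V) : ℕ :=
  ((square G).neighborSet v).ncard

theorem stmt_3 (G : SimpleGraph V) (hG : ClawFree G) (v : V)
    (h : ∃ x ∈ G.neighborSet v, ∃ y ∈ G.neighborSet v, x ≠ y ∧ ¬G.Adj x y ∧
      ∀ w, w ≠ v → ¬(G.Adj x w ∧ G.Adj w y)) :
    ∃ C₁ C₂ : Set V, G.IsClique C₁ ∧ G.IsClique C₂ ∧ G.neighborSet v ⊆ C₁ ∪ C₂ := by

  obtain ⟨x, hx, y, hy, hxy, hnxy, hno⟩ := h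
  simp only [SimpleGraph.mem_neighborSet] at hx hy
  refine ⟨{z | G.Adj v z ∧ (G.Adj z x ∨ z = x)}, {z | G.Adj v z ∧ (G.Adj z y ∨ z = y)},
    ?_, ?_, ?_⟩
  · rintro z ⟨hvz, hz⟩ w ⟨hvw, hw⟩ hzw
    rcases hz with hz | rfl
    · rcases hw with hw | rfl
      · -- both adjacent to x; use claw at v with z, w, y
        have hzy : z ≠ y := fun h => hnxy (h ▸ hz.symm)
        have hwy : w ≠ y := fun h => hnxy (h ▸ hw.symm)
        rcases hG v z w y hvz hvw hy hzw hzy hwy with h1 | h1 | h1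
        · exact h1
        · exact absurd ⟨hz.symm, h1⟩ (hno z (G.ne_of_adj hvz).symm)
        · exact absurd ⟨hw.symm, h1⟩ (hno w (G.ne_of_adj hvw).symm)
      · exact hz
    · rcases hw with hw | rfl
      · exact hw.symm
      · exact absurd rfl hzw
  · rintro z ⟨hvz, hz⟩ w ⟨hvw, hw⟩ hzw
    rcases hz with hz | rfl
    · rcases hw with hw | rfl
      · have hzx : z ≠ x := fun h => hnxy (h ▸ hz)
        have hwx : w ≠ x := fun h => hnxy (h ▸ hw)
        rcases hG v z w x hvz hvw hx hzw hzx hwx with h1 | h1 | h1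
        · exact h1
        · exact absurd ⟨h1.symm, hz⟩ (hno z (G.ne_of_adj hvz).symm)
        · exact absurd ⟨h1.symm, hw⟩ (hno w (G.ne_of_adj hvw).symm)
      · exact hz
    · rcases hw with hw | rfl
      · exact hw.symm
      · exact absurd rfl hzw
  · intro z hz
    simp only [SimpleGraph.mem_neighborSet] at hz
    by_cases hzx : z = x
    · exact Or.inl ⟨hz, Or.inr hzx⟩
    by_cases hzy : z = y
    · exact Or.inr ⟨hz, Or.inr hzy⟩
    rcases hG v x y z hx hy hz hxy (Ne.symm hzx) (Ne.symm hzy) with h1 | h1 | h1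
    · exact absurd h1 hnxy
    · exact Or.inl ⟨hz, Or.inl h1.symm⟩
    · exact Or.inr ⟨hz, Or.inl h1.symm⟩
end

section
/- Let G be a connected graph and let C and C' be cliques of G that are both homogeneous sets and are maximal with respect to inclusion among cliques that are homogeneous sets. Then C and C' are either disjoint or equal. -/
open SimpleGraph Finset

variable {V : Type*}

/-- A homogeneous set: every outside vertex is complete or anticomplete to it. -/
def IsHomogeneous (G : SimpleGraph V) (S : Set V) : Prop :=
  ∀ u ∉ S, (∀ s ∈ S, G.Adj u s) ∨ (∀ s ∈ S, ¬G.Adj u s)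

theorem stmt_7 (G : SimpleGraph V) (hconn : G.Connected) (C C' : Set V)
    (hC : G.IsClique C) (hC' : G.IsClique C')
    (hHC : IsHomogeneous G C) (hHC' : IsHomogeneous G C')
    (hmaxC : ∀ D : Set V, G.IsClique D → IsHomogeneous G D → C ⊆ D → C = D)
    (hmaxC' : ∀ D : Set V, G.IsClique D → IsHomogeneous G D → C' ⊆ D → C' = D) :
    Disjoint C C' ∨ C = C' := by
  by_cases hdisj : Disjoint C C'
  · exact Or.inl hdisj
  right
  obtain ⟨x, hxC, hxC'⟩ := Set.not_disjoint_iff.mp hdisj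
  -- key: any vertex of C \ C' is adjacent to all of C', and vice versa
  have key : ∀ {A B : Set V}, G.IsClique A → IsHomogeneous G B →
      x ∈ A → x ∈ B → ∀ u ∈ A, u ∉ B → ∀ s ∈ B, G.Adj u s := by
    intro A B hA hB hxA hxB u huA huB
    have hux : G.Adj u x := hA huA hxA (fun h => huB (h ▸ hxB))
    rcases hB u huB with h | h
    · exact h
    · exact absurd hux (h x hxB)
  have hclique : G.IsClique (C ∪ C') := by
    intro u hu w hw huw
    rcases hu with hu | hu <;> rcases hw with hw | hw
    · exact hC hu hw huw
    · by_cases hwC : w ∈ C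
      · exact hC hu hwC huw
      · exact (key hC' hHC hxC' hxC w hw hwC u hu).symm
    · by_cases huC : u ∈ C
      · exact hC huC hw huw
      · exact key hC' hHC hxC' hxC u hu huC w hw
    · exact hC' hu hw huw
  have hhom : IsHomogeneous G (C ∪ C') := by
    intro u hu
    have huC : u ∉ C := fun h => hu (Or.inl h)
    have huC' : u ∉ C' := fun h => hu (Or.inr h)
    rcases hHC u huC with h1 | h1 <;> rcases hHC' u huC' with h2 | h2
    · exact Or.inl (by rintro s (hs | hs); exacts [h1 s hs, h2 s hs])
    · exact absurd (h1 x hxC) (h2 x hxC')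
    · exact absurd (h2 x hxC') (h1 x hxC)
    · exact Or.inr (by rintro s (hs | hs); exacts [h1 s hs, h2 s hs])
  have e1 := hmaxC _ hclique hhom Set.subset_union_left
  have e2 := hmaxC' _ hclique hhom Set.subset_union_right
  exact e1.trans e2.symm
end

section
/- Let G be a quasi-line graph with clique number ω containing a homogeneous pair of cliques (A, B) such that there exist a₁, a₂ ∈ A and b ∈ B with a₁b an edge and a₂b not an edge. Then every vertex b₀ ∈ B satisfies deg_{G²}(b₀) ≤ ω² + ω. -/
open SimpleGraph Finset

variable {V : Type*}

/-- A quasi-line graph: every neighbourhood is covered by two cliques. -/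
def QuasiLine (G : SimpleGraph V) : Prop :=
  ∀ v : V, ∃ C₁ C₂ : Set V, G.IsClique C₁ ∧ G.IsClique C₂ ∧ G.neighborSet v ⊆ C₁ ∪ C₂

lemma quasiLine_clawFree (G : SimpleGraph V) (hG : QuasiLine G) : ClawFree G := by
  intro v a b c hva hvb hvc hab hac hbc
  obtain ⟨C₁, C₂, h1, h2, hsub⟩ := hG v
  have ha : a ∈ C₁ ∪ C₂ := hsub hva
  have hb : b ∈ C₁ ∪ C₂ := hsub hvb
  have hc : c ∈ C₁ ∪ C₂ := hsub hvc
  rcases ha with ha | ha <;> rcases hb with hb | hb <;> rcases hc with hc | hc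
  · exact Or.inl (h1 ha hb hab)
  · exact Or.inl (h1 ha hb hab)
  · exact Or.inr (Or.inl (h1 ha hc hac))
  · exact Or.inr (Or.inr (h2 hb hc hbc))
  · exact Or.inr (Or.inr (h1 hb hc hbc))
  · exact Or.inr (Or.inl (h2 ha hc hac))
  · exact Or.inl (h2 ha hb hab)
  · exact Or.inl (h2 ha hb hab)

lemma clique_ncard_le [Fintype V] (G : SimpleGraph V) (S : Set V) (hS : G.IsClique S) :
    S.ncard ≤ G.cliqueNum := by
  classical
  rw [Set.ncard_eq_toFinset_card' S]
  exact SimpleGraph.IsClique.card_le_cliqueNum (tc := by simpa using hS)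

theorem stmt_8 [Fintype V] (G : SimpleGraph V) (hG : QuasiLine G)
    (A B : Set V) (hAB : Disjoint A B) (hA : G.IsClique A) (hB : G.IsClique B)
    (hsize : 2 ≤ A.ncard ∨ 2 ≤ B.ncard)
    (hhomA : ∀ u, u ∉ A → u ∉ B → (∀ a ∈ A, G.Adj u a) ∨ (∀ a ∈ A, ¬G.Adj u a))
    (hhomB : ∀ u, u ∉ A → u ∉ B → (∀ b ∈ B, G.Adj u b) ∨ (∀ b ∈ B, ¬G.Adj u b))
    (a₁ a₂ : A) (b : B) (hadj : G.Adj a₁ b) (hnadj : ¬G.Adj a₂ b) :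
    ∀ b₀ ∈ B, sqDeg G b₀ ≤ G.cliqueNum ^ 2 + G.cliqueNum := by
  classical
  intro b₀ hb₀
  set ω := G.cliqueNum with hωdef
  have cf : ClawFree G := quasiLine_clawFree G hG
  -- outside vertices complete to A, non-neighbours of b₀
  set NA : Set V := {w | w ∉ A ∧ w ∉ B ∧ ¬G.Adj b₀ w ∧ (∀ a ∈ A, G.Adj w a)} with hNAdef
  -- outside neighbours of b₀ anticomplete to A
  set X0 : Set V := {x | G.Adj b₀ x ∧ x ∉ A ∧ x ∉ B ∧ (∀ a ∈ A, ¬G.Adj x a)} with hX0def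
  set Q : V → Set V := fun x => {w | G.Adj x w ∧ ¬G.Adj b₀ w ∧ w ≠ b₀} with hQdef
  have ha₁b : (a₁ : V) ≠ (b : V) := fun h => (Set.disjoint_left.mp hAB a₁.2) (h ▸ b.2)
  -- members of NA are anticomplete to B
  have hNA_antiB : ∀ w ∈ NA, ∀ b' ∈ B, ¬G.Adj w b' := by
    intro w hw b' hb'
    rcases hhomB w hw.1 hw.2.1 with h | h
    · exact absurd (h b₀ hb₀).symm hw.2.2.1
    · exact h b' hb'
  -- members of X0 are complete to B
  have hX0_compB : ∀ x ∈ X0, ∀ b' ∈ B, G.Adj x b' := by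
    intro x hx b' hb'
    rcases hhomB x hx.2.1 hx.2.2.1 with h | h
    · exact h b' hb'
    · exact absurd hx.1.symm (h b₀ hb₀)
  -- clique 1 : A ∪ NA
  have clique1 : G.IsClique (A ∪ NA) := by
    intro u hu v hv huv
    rcases hu with hu | hu <;> rcases hv with hv | hv
    · exact hA hu hv huv
    · exact (hv.2.2.2 u hu).symm
    · exact hu.2.2.2 v hv
    · have h1 : G.Adj (a₁ : V) u := (hu.2.2.2 a₁ a₁.2).symm
      have h2 : G.Adj (a₁ : V) v := (hv.2.2.2 a₁ a₁.2).symm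
      have hbu : (b : V) ≠ u := fun h => hu.2.1 (h ▸ b.2)
      have hbv : (b : V) ≠ v := fun h => hv.2.1 (h ▸ b.2)
      rcases cf a₁ b u v hadj h1 h2 hbu hbv huv with h | h | h
      · exact absurd h.symm (hNA_antiB u hu b b.2)
      · exact absurd h.symm (hNA_antiB v hv b b.2)
      · exact h
  -- clique 3 : insert b X0
  have clique3 : G.IsClique (insert (b : V) X0) := by
    intro u hu v hv huv
    rcases hu with hu | hu <;> rcases hv with hv | hv
    · exact absurd (hu.trans hv.symm) huv
    · exact hu ▸ (hX0_compB v hv b b.2).symm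
    · exact hv ▸ hX0_compB u hu b b.2
    · have h1 : G.Adj (b : V) u := (hX0_compB u hu b b.2).symm
      have h2 : G.Adj (b : V) v := (hX0_compB v hv b b.2).symm
      have hau : (a₁ : V) ≠ u := fun h => hu.2.1 (h ▸ a₁.2)
      have hav : (a₁ : V) ≠ v := fun h => hv.2.1 (h ▸ a₁.2)
      rcases cf b a₁ u v hadj.symm h1 h2 hau hav huv with h | h | h
      · exact absurd h.symm (hu.2.2.2 a₁ a₁.2)
      · exact absurd h.symm (hv.2.2.2 a₁ a₁.2)
      · exact h
  -- clique 4 : insert x (Q x) for x ∈ X0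
  have clique4 : ∀ x, G.Adj b₀ x → G.IsClique (insert x (Q x)) := by
    intro x hx u hu v hv huv
    rcases hu with hu | hu <;> rcases hv with hv | hv
    · exact absurd (hu.trans hv.symm) huv
    · exact hu ▸ hv.1
    · exact (hv ▸ hu.1).symm
    · rcases cf x b₀ u v hx.symm hu.1 hv.1 (Ne.symm hu.2.2) (Ne.symm hv.2.2) huv
        with h | h | h
      · exact absurd h hu.2.1
      · exact absurd h hv.2.1
      · exact h
  -- the covering
  have hcov : (square G).neighborSet b₀ ⊆
      ((A ∪ NA) ∪ G.neighborSet b₀) ∪ (⋃ x ∈ X0, Q x) := by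
    intro w hw
    have hw' : b₀ ≠ w ∧ (G.Adj b₀ w ∨ ∃ x, G.Adj b₀ x ∧ G.Adj x w) := hw
    obtain ⟨hne, hcase⟩ := hw'
    by_cases hbw : G.Adj b₀ w
    · exact Or.inl (Or.inr hbw)
    rcases hcase with h | ⟨u, hbu, huw⟩
    · exact absurd h hbw
    by_cases hwA : w ∈ A
    · exact Or.inl (Or.inl (Or.inl hwA))
    have hwB : w ∉ B := fun h => hbw (hB hb₀ h hne)
    have hwantiB : ∀ b' ∈ B, ¬G.Adj w b' := by
      rcases hhomB w hwA hwB with h | h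
      · exact absurd (h b₀ hb₀).symm hbw
      · exact h
    rcases hhomA w hwA hwB with h | hwantiA
    · exact Or.inl (Or.inl (Or.inr ⟨hwA, hwB, hbw, h⟩))
    have huA : u ∉ A := fun h => hwantiA u h huw.symm
    have huB : u ∉ B := fun h => hwantiB u h huw.symm
    have hucompB : ∀ b' ∈ B, G.Adj u b' := by
      rcases hhomB u huA huB with h | h
      · exact h
      · exact absurd hbu.symm (h b₀ hb₀)
    rcases hhomA u huA huB with hucompA | huantiA
    · -- contradiction via claw at u
      exfalso
      have h1 : G.Adj u (a₂ : V) := hucompA a₂ a₂.2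
      have h2 : G.Adj u (b : V) := hucompB b b.2
      have ne1 : (a₂ : V) ≠ (b : V) := fun h => (Set.disjoint_left.mp hAB a₂.2) (h ▸ b.2)
      have ne2 : (a₂ : V) ≠ w := fun h => hwA (h ▸ a₂.2)
      have ne3 : (b : V) ≠ w := fun h => hwB (h ▸ b.2)
      rcases cf u a₂ b w h1 h2 huw ne1 ne2 ne3 with h | h | h
      · exact hnadj h
      · exact hwantiA a₂ a₂.2 h.symm
      · exact hwantiB b b.2 h.symm
    · refine Or.inr (Set.mem_biUnion (show u ∈ X0 from ⟨hbu, huA, huB, huantiA⟩) ?_)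
      exact ⟨huw, hbw, hne.symm⟩
  -- cardinality bounds
  have card1 : (A ∪ NA).ncard ≤ ω := clique_ncard_le G _ clique1
  -- neighbourhood of b₀
  obtain ⟨C₁, C₂, hc1, hc2, hsub⟩ := hG b₀
  set D₁ : Set V := C₁ ∩ G.neighborSet b₀ with hD1
  set D₂ : Set V := C₂ ∩ G.neighborSet b₀ with hD2
  have cliqueD : ∀ (C : Set V), G.IsClique C →
      G.IsClique (insert b₀ (C ∩ G.neighborSet b₀)) := by
    intro C hC u hu v hv huv
    rcases hu with hu | hu <;> rcases hv with hv | hv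
    · exact absurd (hu.trans hv.symm) huv
    · exact hu ▸ hv.2
    · exact (hv ▸ hu.2).symm
    · exact hC hu.1 hv.1 huv
  have hb0D : ∀ (C : Set V), b₀ ∉ C ∩ G.neighborSet b₀ :=
    fun C h => G.loopless.irrefl b₀ h.2
  have cardD1 : D₁.ncard + 1 ≤ ω := by
    have := clique_ncard_le G _ (cliqueD C₁ hc1)
    rwa [Set.ncard_insert_of_notMem (hb0D C₁) (Set.toFinite _)] at this
  have cardD2 : D₂.ncard + 1 ≤ ω := by
    have := clique_ncard_le G _ (cliqueD C₂ hc2)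
    rwa [Set.ncard_insert_of_notMem (hb0D C₂) (Set.toFinite _)] at this
  have cardN : (G.neighborSet b₀).ncard ≤ D₁.ncard + D₂.ncard := by
    refine le_trans (Set.ncard_le_ncard ?_ (Set.toFinite _)) (Set.ncard_union_le _ _)
    intro w hw
    rcases hsub hw with h | h
    · exact Or.inl ⟨h, hw⟩
    · exact Or.inr ⟨h, hw⟩
  have hbX0 : (b : V) ∉ X0 := fun h => h.2.2.1 b.2
  have cardX0 : X0.ncard + 1 ≤ ω := by
    have := clique_ncard_le G _ clique3
    rwa [Set.ncard_insert_of_notMem hbX0 (Set.toFinite _)] at this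
  have cardQ : ∀ x ∈ X0, (Q x).ncard + 1 ≤ ω := by
    intro x hx
    have hxQ : x ∉ Q x := fun h => h.2.1 hx.1
    have := clique_ncard_le G _ (clique4 x hx.1)
    rwa [Set.ncard_insert_of_notMem hxQ (Set.toFinite _)] at this
  -- biUnion bound
  set s : Finset V := X0.toFinset with hsdef
  set U : Set V := ⋃ x ∈ X0, Q x with hUdef
  have hm : s.card = X0.ncard := (Set.ncard_eq_toFinset_card' X0).symm
  have hUsum : U.ncard ≤ ∑ x ∈ s, (Q x).toFinset.card := by
    rw [Set.ncard_eq_toFinset_card' U]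
    refine le_trans (Finset.card_le_card ?_) Finset.card_biUnion_le
    intro w hw
    rw [Set.mem_toFinset] at hw
    obtain ⟨x, hx, hq⟩ := Set.mem_iUnion₂.mp hw
    exact Finset.mem_biUnion.mpr ⟨x, Set.mem_toFinset.mpr hx, Set.mem_toFinset.mpr hq⟩
  have hsum2 : ∑ x ∈ s, (Q x).toFinset.card + s.card ≤ s.card * ω := by
    have h1 : ∀ x ∈ s, (Q x).toFinset.card + 1 ≤ ω := by
      intro x hx
      rw [← Set.ncard_eq_toFinset_card']
      exact cardQ x (Set.mem_toFinset.mp hx)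
    calc ∑ x ∈ s, (Q x).toFinset.card + s.card
        = ∑ x ∈ s, ((Q x).toFinset.card + 1) := by
          rw [Finset.sum_add_distrib, Finset.sum_const, smul_eq_mul, mul_one]
      _ ≤ ∑ _x ∈ s, ω := Finset.sum_le_sum h1
      _ = s.card * ω := by rw [Finset.sum_const, smul_eq_mul]
  have hU : U.ncard + X0.ncard ≤ X0.ncard * ω := by
    rw [← hm]
    exact le_trans (Nat.add_le_add_right hUsum s.card) hsum2
  -- put it all together
  have htot : sqDeg G b₀ ≤ (A ∪ NA).ncard + (G.neighborSet b₀).ncard + U.ncard := by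
    have h1 : sqDeg G b₀ ≤ (((A ∪ NA) ∪ G.neighborSet b₀) ∪ U).ncard :=
      Set.ncard_le_ncard hcov (Set.toFinite _)
    refine le_trans h1 (le_trans (Set.ncard_union_le _ _) ?_)
    exact Nat.add_le_add_right (Set.ncard_union_le _ _) _
  -- arithmetic
  set m := X0.ncard with hmdef
  have hω1 : 1 ≤ ω := by omega
  obtain ⟨t, ht⟩ : ∃ t, ω = t + 1 := ⟨ω - 1, by omega⟩
  have e1 : m * ω = m * t + m := by rw [ht]; ring
  have hi : U.ncard ≤ m * t := by omega
  have hm' : m ≤ t := by omega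
  have hi2 : U.ncard ≤ t * t := le_trans hi (Nat.mul_le_mul_right t hm')
  have hexp : ω ^ 2 + ω = t * t + 2 * t + 1 + ω := by rw [ht]; ring
  rw [hexp]
  omega
end

section
/- For any vertex v of a circular interval graph G, the degree of v in the square of G satisfies deg_{G²}(v) ≤ 4ω(G) − 4, where ω(G) is the clique number. -/
open SimpleGraph Finset

variable {V : Type*}

lemma coeRC_add (x y : ℝ) : ((x + y : ℝ) : AddCircle (1:ℝ)) = (x : AddCircle (1:ℝ)) + (y : AddCircle (1:ℝ)) := rfl
lemma coeRC_sub (x y : ℝ) : ((x - y : ℝ) : AddCircle (1:ℝ)) = (x : AddCircle (1:ℝ)) - (y : AddCircle (1:ℝ)) := rfl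

noncomputable def gO {V : Type*} (f : V → AddCircle (1:ℝ)) (v u : V) : ℝ :=
  haveI : Fact ((0:ℝ) < 1) := ⟨one_pos⟩
  ((AddCircle.equivIco 1 0) (f u - f v) : ℝ)

lemma gO_mem {V : Type*} (f : V → AddCircle (1:ℝ)) (v u : V) : gO f v u ∈ Set.Ico (0:ℝ) 1 := by
  haveI : Fact ((0:ℝ) < 1) := ⟨one_pos⟩
  have := ((AddCircle.equivIco 1 0) (f u - f v)).2
  have h2 : gO f v u ∈ Set.Ico (0:ℝ) (0 + 1) := this
  simpa using h2

lemma gO_coe {V : Type*} (f : V → AddCircle (1:ℝ)) (v u : V) :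
    ((gO f v u : ℝ) : AddCircle (1:ℝ)) = f u - f v := by
  haveI : Fact ((0:ℝ) < 1) := ⟨one_pos⟩
  exact (AddCircle.equivIco (1:ℝ) 0).symm_apply_apply (f u - f v)

lemma intcase {x : ℝ} (h : (x : AddCircle (1:ℝ)) = 0) : ∃ n : ℤ, x = n := by
  obtain ⟨n, hn⟩ := (AddCircle.coe_eq_zero_iff 1).mp h
  exact ⟨n, by simpa using hn.symm⟩

section Core
variable {V : Type*} {k : ℕ}

def Arc (a b : Fin k → ℝ) (i : Fin k) (p : AddCircle (1:ℝ)) : Prop :=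
  ∃ t : ℝ, t ∈ Set.Icc (a i) (b i) ∧ (t : AddCircle (1:ℝ)) = p

def PlusStep (f : V → AddCircle (1:ℝ)) (a b : Fin k → ℝ) (u w : V) : Prop :=
  ∃ (i : Fin k) (t s : ℝ), t ∈ Set.Icc (a i) (b i) ∧ s ∈ Set.Icc (a i) (b i) ∧ t ≤ s ∧
    ((t : AddCircle (1:ℝ)) = f u) ∧ ((s : AddCircle (1:ℝ)) = f w)

lemma gO_self (f : V → AddCircle (1:ℝ)) (v : V) : gO f v v = 0 := by
  have h := gO_coe f v v
  rw [sub_self] at h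
  obtain ⟨n, hn⟩ := intcase h
  have hm := gO_mem f v v
  have h0 : (0:ℝ) ≤ n := hn ▸ hm.1
  have h1 : (n:ℝ) < 1 := hn ▸ hm.2
  have h0' : 0 ≤ n := by exact_mod_cast h0
  have h1' : n < 1 := by exact_mod_cast h1
  have : n = 0 := by omega
  rw [hn, this, Int.cast_zero]

lemma gO_eq_iff (f : V → AddCircle (1:ℝ)) (v u w : V) : gO f v u = gO f v w ↔ f u = f w := by
  constructor
  · intro h
    have h1 := gO_coe f v u
    have h2 := gO_coe f v w
    rw [h, h2] at h1
    have := sub_left_inj.mp h1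
    exact this.symm ▸ rfl
  · intro h; unfold gO; rw [h]

lemma stepCore {f : V → AddCircle (1:ℝ)} {a b : Fin k → ℝ} (hlen : ∀ i, b i - a i < 1)
    (v : V) {u w : V} (h : PlusStep f a b u w) :
    ∃ (i : Fin k) (t s : ℝ), t ∈ Set.Icc (a i) (b i) ∧ s ∈ Set.Icc (a i) (b i) ∧ t ≤ s ∧
      ((t : AddCircle (1:ℝ)) = f u) ∧ ((s : AddCircle (1:ℝ)) = f w) ∧
      (s - t = gO f v w - gO f v u ∨ s - t = gO f v w - gO f v u + 1) := by
  obtain ⟨i, t, s, ht, hs, hts, htu, hsw⟩ := h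
  refine ⟨i, t, s, ht, hs, hts, htu, hsw, ?_⟩
  have key : ((s - t - (gO f v w - gO f v u) : ℝ) : AddCircle (1:ℝ)) = 0 := by
    rw [coeRC_sub, coeRC_sub, coeRC_sub, htu, hsw, gO_coe, gO_coe]
    abel
  obtain ⟨n, hn⟩ := intcase key
  have hst1 : s - t < 1 := by
    have h3 := hlen i; have h4 := ht.1; have h5 := hs.2; linarith
  have hst0 : 0 ≤ s - t := by linarith
  have hu := gO_mem f v u
  have hw := gO_mem f v w
  simp only [Set.mem_Ico] at hu hw
  have hn2 : (n:ℝ) < 2 := by rw [← hn]; linarith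
  have hn1 : (-1:ℝ) < n := by rw [← hn]; linarith
  have hn2' : n < 2 := by exact_mod_cast hn2
  have hn1' : -1 < n := by exact_mod_cast hn1
  have hcases : n = 0 ∨ n = 1 := by omega
  rcases hcases with h0 | h1
  · left; rw [h0] at hn; push_cast at hn; linarith
  · right; rw [h1] at hn; push_cast at hn; linarith

lemma insertArc {f : V → AddCircle (1:ℝ)} {a b : Fin k → ℝ} {i : Fin k} {t s : ℝ} {u w : V}
    (v : V) (ht : t ∈ Set.Icc (a i) (b i)) (hs : s ∈ Set.Icc (a i) (b i))
    (htu : (t : AddCircle (1:ℝ)) = f u) (hst : s - t = gO f v w - gO f v u)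
    (z : V) (h1 : gO f v u ≤ gO f v z) (h2 : gO f v z ≤ gO f v w) :
    Arc a b i (f z) := by
  refine ⟨t + (gO f v z - gO f v u), ⟨?_, ?_⟩, ?_⟩
  · have := ht.1; linarith
  · have := hs.2; linarith
  · rw [coeRC_add, coeRC_sub, htu, gO_coe, gO_coe]
    abel

lemma insertV {f : V → AddCircle (1:ℝ)} {a b : Fin k → ℝ} {i : Fin k} {t s : ℝ} {u w : V}
    (v : V) (ht : t ∈ Set.Icc (a i) (b i)) (hs : s ∈ Set.Icc (a i) (b i))
    (htu : (t : AddCircle (1:ℝ)) = f u) (hst : s - t = gO f v w - gO f v u + 1) :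
    Arc a b i (f v) := by
  refine ⟨t + (1 - gO f v u), ⟨?_, ?_⟩, ?_⟩
  · have := ht.1; have := (gO_mem f v u).2; linarith
  · have := hs.2; have := (gO_mem f v w).1; linarith
  · have e2 : ((1:ℝ) : AddCircle (1:ℝ)) = 0 := (AddCircle.coe_eq_zero_iff 1).mpr ⟨1, by simp⟩
    rw [coeRC_add, coeRC_sub, htu, e2, gO_coe]
    abel

end Core

section Graph
open SimpleGraph
variable {V : Type*} {k : ℕ} {G : SimpleGraph V} {f : V → AddCircle (1:ℝ)} {a b : Fin k → ℝ}

def Rset (f : V → AddCircle (1:ℝ)) (a b : Fin k → ℝ) (v : V) : Set V :=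
  {x | x ≠ v ∧ PlusStep f a b v x}

def Sset (G : SimpleGraph V) (f : V → AddCircle (1:ℝ)) (a b : Fin k → ℝ) (v : V) : Set V :=
  {w | w ≠ v ∧ ¬G.Adj v w ∧ ∃ x, x ≠ v ∧ PlusStep f a b v x ∧ PlusStep f a b x w}

-- abbreviation for the arc-form adjacency hypothesis
def ArcAdj (G : SimpleGraph V) (f : V → AddCircle (1:ℝ)) (a b : Fin k → ℝ) : Prop :=
  ∀ u w : V, G.Adj u w ↔ u ≠ w ∧ ∃ i : Fin k, Arc a b i (f u) ∧ Arc a b i (f w)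

lemma adj_of_arcs (hA : ArcAdj G f a b) {i : Fin k} {u w : V}
    (hu : Arc a b i (f u)) (hw : Arc a b i (f w)) (hne : u ≠ w) : G.Adj u w :=
  (hA u w).2 ⟨hne, i, hu, hw⟩

lemma adj_of_plus (hA : ArcAdj G f a b) {u w : V} (h : PlusStep f a b u w) (hne : u ≠ w) :
    G.Adj u w := by
  obtain ⟨i, t, s, ht, hs, _, htu, hsw⟩ := h
  exact adj_of_arcs hA ⟨t, ht, htu⟩ ⟨s, hs, hsw⟩ hne

lemma plus_of_adj (hA : ArcAdj G f a b) {u w : V} (h : G.Adj u w) :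
    PlusStep f a b u w ∨ PlusStep f a b w u := by
  obtain ⟨-, i, ⟨t, ht, htu⟩, ⟨s, hs, hsw⟩⟩ := (hA u w).1 h
  rcases le_total t s with hle | hle
  · exact Or.inl ⟨i, t, s, ht, hs, hle, htu, hsw⟩
  · exact Or.inr ⟨i, s, t, hs, ht, hle, hsw, htu⟩

lemma gO_ne (hf : Function.Injective f) {v u w : V} (h : u ≠ w) : gO f v u ≠ gO f v w :=
  fun hc => h (hf ((gO_eq_iff f v u w).1 hc))

lemma gO_pos (hf : Function.Injective f) {v w : V} (h : w ≠ v) : 0 < gO f v w := by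
  rcases lt_or_eq_of_le (gO_mem f v w).1 with h' | h'
  · exact h'
  · exact absurd (h'.symm.trans (gO_self f v).symm) (gO_ne hf h)

/-- `PlusStep` from `v` always has offset exactly `gO`. -/
lemma stepV {v x : V} (hlen : ∀ i, b i - a i < 1) (h : PlusStep f a b v x) :
    ∃ (i : Fin k) (t s : ℝ), t ∈ Set.Icc (a i) (b i) ∧ s ∈ Set.Icc (a i) (b i) ∧ t ≤ s ∧
      ((t : AddCircle (1:ℝ)) = f v) ∧ ((s : AddCircle (1:ℝ)) = f x) ∧
      s - t = gO f v x - gO f v v := by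
  obtain ⟨i, t, s, ht, hs, hts, htv, hsx, hd⟩ := stepCore hlen v h
  refine ⟨i, t, s, ht, hs, hts, htv, hsx, ?_⟩
  rcases hd with h0 | h1
  · exact h0
  · exfalso
    have hst1 : s - t < 1 := by have := hlen i; have := ht.1; have := hs.2; linarith
    have h2 := (gO_mem f v x).1
    rw [gO_self] at h1
    linarith

/-- If `v` can reach `x` and `w` via plus-steps ending both at `x`, then `v ~ w`. -/
lemma caseB (hlen : ∀ i, b i - a i < 1) (hA : ArcAdj G f a b)
    {v x w : V} (h1 : PlusStep f a b v x) (h2 : PlusStep f a b w x) (hwv : w ≠ v) :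
    G.Adj v w := by
  obtain ⟨i, t, s, ht, hs, hts, htw, hsx, hd⟩ := stepCore hlen v h2
  rcases hd with h0 | hp1
  · -- gO w ≤ gO x ; insert w in the arc from v to x
    have hwx : gO f v w ≤ gO f v x := by linarith
    obtain ⟨j, t', s', ht', hs', hts', ht'v, hs'x, hd'⟩ := stepV hlen h1
    have harcw : Arc a b j (f w) := by
      refine insertArc v ht' hs' ht'v hd' w ?_ hwx
      rw [gO_self]; exact (gO_mem f v w).1
    exact adj_of_arcs hA ⟨t', ht', ht'v⟩ harcw hwv.symm
  · exact adj_of_arcs hA (insertV v ht hs htw hp1) ⟨t, ht, htw⟩ hwv.symm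

/-- Structure of second neighbours reached by two plus-steps. -/
lemma Sstruct (hlen : ∀ i, b i - a i < 1) (hf : Function.Injective f) (hA : ArcAdj G f a b)
    {v w : V} (hw : w ∈ Sset G f a b v) :
    ∃ (x : V) (i : Fin k) (t s : ℝ), x ≠ v ∧ PlusStep f a b v x ∧
      t ∈ Set.Icc (a i) (b i) ∧ s ∈ Set.Icc (a i) (b i) ∧
      ((t : AddCircle (1:ℝ)) = f x) ∧ ((s : AddCircle (1:ℝ)) = f w) ∧
      s - t = gO f v w - gO f v x ∧ gO f v x < gO f v w := by
  obtain ⟨hwv, hnadj, x, hxv, hPvx, hPxw⟩ := hw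
  obtain ⟨i, t, s, ht, hs, hts, htx, hsw, hd⟩ := stepCore hlen v hPxw
  rcases hd with h0 | hp1
  · have hxw : x ≠ w := by
      rintro rfl
      exact hnadj (adj_of_plus hA hPvx hxv.symm)
    have hlt : gO f v x < gO f v w :=
      lt_of_le_of_ne (by linarith) (gO_ne hf hxw)
    exact ⟨x, i, t, s, hxv, hPvx, ht, hs, htx, hsw, h0, hlt⟩
  · exact absurd (adj_of_arcs hA (insertV v ht hs htx hp1) ⟨s, hs, hsw⟩ hwv.symm) hnadj

/-- Two distinct second neighbours are adjacent. -/
lemma Spair (hlen : ∀ i, b i - a i < 1) (hf : Function.Injective f) (hA : ArcAdj G f a b)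
    {v w1 w2 : V} (h1 : w1 ∈ Sset G f a b v) (h2 : w2 ∈ Sset G f a b v) (hne : w1 ≠ w2)
    (hlt : gO f v w1 < gO f v w2) : G.Adj w1 w2 := by
  obtain ⟨x2, i, t, s, hx2v, hPvx2, ht, hs, htx2, hsw2, hd, hx2w2⟩ := Sstruct hlen hf hA h2
  have hkey : gO f v x2 < gO f v w1 := by
    by_contra hcon
    push_neg at hcon
    obtain ⟨j, t', s', ht', hs', hts', ht'v, hs'x, hd'⟩ := stepV hlen hPvx2
    have harcw : Arc a b j (f w1) := by
      refine insertArc v ht' hs' ht'v hd' w1 ?_ hcon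
      rw [gO_self]; exact (gO_mem f v w1).1
    exact h1.2.1 (adj_of_arcs hA ⟨t', ht', ht'v⟩ harcw h1.1.symm)
  have harc1 : Arc a b i (f w1) := insertArc v ht hs htx2 hd w1 hkey.le hlt.le
  exact adj_of_arcs hA harc1 ⟨s, hs, hsw2⟩ hne

/-- The chosen max neighbour is adjacent to every second neighbour. -/
lemma SwithX (hlen : ∀ i, b i - a i < 1) (hf : Function.Injective f) (hA : ArcAdj G f a b)
    {v x0 : V} (hx0 : x0 ∈ Rset f a b v)
    (hmax : ∀ x ∈ Rset f a b v, gO f v x ≤ gO f v x0)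
    {w : V} (hw : w ∈ Sset G f a b v) : G.Adj x0 w := by
  obtain ⟨x, i, t, s, hxv, hPvx, ht, hs, htx, hsw, hd, hxw⟩ := Sstruct hlen hf hA hw
  have h1 : gO f v x ≤ gO f v x0 := hmax x ⟨hxv, hPvx⟩
  have h2 : gO f v x0 < gO f v w := by
    by_contra hcon
    push_neg at hcon
    obtain ⟨j, t', s', ht', hs', hts', ht'v, hs'x, hd'⟩ := stepV hlen hx0.2
    have harcw : Arc a b j (f w) := by
      refine insertArc v ht' hs' ht'v hd' w ?_ hcon
      rw [gO_self]; exact (gO_mem f v w).1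
    exact hw.2.1 (adj_of_arcs hA ⟨t', ht', ht'v⟩ harcw hw.1.symm)
  have hne : x0 ≠ w := fun hc => absurd (congrArg (gO f v) hc) (ne_of_lt h2)
  exact adj_of_arcs hA (insertArc v ht hs htx hd x0 h1 h2.le) ⟨s, hs, hsw⟩ hne

lemma Rclique (hlen : ∀ i, b i - a i < 1) (hf : Function.Injective f) (hA : ArcAdj G f a b)
    (v : V) : G.IsClique (insert v (Rset f a b v)) := by
  intro x hx y hy hne
  rcases Set.mem_insert_iff.1 hx with hx' | hx'
  · rcases Set.mem_insert_iff.1 hy with hy' | hy'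
    · exact absurd (hx'.trans hy'.symm) hne
    · subst hx'; exact adj_of_plus hA hy'.2 hne
  · rcases Set.mem_insert_iff.1 hy with hy' | hy'
    · subst hy'; exact (adj_of_plus hA hx'.2 hne.symm).symm
    · have hx := hx'
      have hy := hy'
      have hgne : gO f v x ≠ gO f v y := gO_ne hf hne
      rcases le_total (gO f v x) (gO f v y) with hle | hle
      · obtain ⟨j, t', s', ht', hs', hts', ht'v, hs'y, hd'⟩ := stepV hlen hy.2
        have harcx : Arc a b j (f x) := by
          refine insertArc v ht' hs' ht'v hd' x ?_ hle
          rw [gO_self]; exact (gO_mem f v x).1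
        exact adj_of_arcs hA harcx ⟨s', hs', hs'y⟩ hne
      · obtain ⟨j, t', s', ht', hs', hts', ht'v, hs'x, hd'⟩ := stepV hlen hx.2
        have harcy : Arc a b j (f y) := by
          refine insertArc v ht' hs' ht'v hd' y ?_ hle
          rw [gO_self]; exact (gO_mem f v y).1
        exact (adj_of_arcs hA harcy ⟨s', hs', hs'x⟩ hne.symm).symm

lemma Sclique (hlen : ∀ i, b i - a i < 1) (hf : Function.Injective f) (hA : ArcAdj G f a b)
    {v x0 : V} (hx0 : x0 ∈ Rset f a b v)
    (hmax : ∀ x ∈ Rset f a b v, gO f v x ≤ gO f v x0) :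
    G.IsClique (insert x0 (Sset G f a b v)) := by
  intro x hx y hy hne
  rcases Set.mem_insert_iff.1 hx with hx' | hx'
  · rcases Set.mem_insert_iff.1 hy with hy' | hy'
    · exact absurd (hx'.trans hy'.symm) hne
    · exact hx' ▸ SwithX hlen hf hA hx0 hmax hy'
  · rcases Set.mem_insert_iff.1 hy with hy' | hy'
    · exact hy' ▸ (SwithX hlen hf hA hx0 hmax hx').symm
    · rcases lt_or_gt_of_ne (gO_ne hf hne) with hlt | hlt
      · exact Spair hlen hf hA hx' hy' hne hlt
      · exact (Spair hlen hf hA hy' hx' hne.symm hlt).symm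

end Graph

section Mirror
variable {V : Type*} {k : ℕ} {G : SimpleGraph V} {f : V → AddCircle (1:ℝ)} {a b : Fin k → ℝ}

lemma coeRC_neg (x : ℝ) : ((-x : ℝ) : AddCircle (1:ℝ)) = -(x : AddCircle (1:ℝ)) := rfl

lemma arc_neg {i : Fin k} {p : AddCircle (1:ℝ)} :
    Arc (fun i => -(b i)) (fun i => -(a i)) i p ↔ Arc a b i (-p) := by
  constructor
  · rintro ⟨t, ⟨h1, h2⟩, ht⟩
    dsimp only at h1 h2
    refine ⟨-t, ⟨by linarith, by linarith⟩, ?_⟩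
    rw [coeRC_neg, ht]
  · rintro ⟨t, ⟨h1, h2⟩, ht⟩
    refine ⟨-t, ⟨by simpa using h2, by simpa using h1⟩, ?_⟩
    rw [coeRC_neg, ht, neg_neg]

lemma plus_neg {u w : V} :
    PlusStep (fun z => -f z) (fun i => -(b i)) (fun i => -(a i)) u w ↔ PlusStep f a b w u := by
  constructor
  · rintro ⟨i, t, s, ⟨ht1, ht2⟩, ⟨hs1, hs2⟩, hts, htu, hsw⟩
    dsimp only at ht1 ht2 hs1 hs2
    refine ⟨i, -s, -t, ⟨by linarith, by linarith⟩, ⟨by linarith, by linarith⟩, by linarith, ?_, ?_⟩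
    · rw [coeRC_neg, hsw, neg_neg]
    · rw [coeRC_neg, htu, neg_neg]
  · rintro ⟨i, t, s, ⟨ht1, ht2⟩, ⟨hs1, hs2⟩, hts, htw, hsu⟩
    refine ⟨i, -s, -t, ⟨by dsimp only; linarith, by dsimp only; linarith⟩,
      ⟨by dsimp only; linarith, by dsimp only; linarith⟩, by linarith, ?_, ?_⟩
    · rw [coeRC_neg, hsu]
    · rw [coeRC_neg, htw]

lemma arcAdj_neg (hA : ArcAdj G f a b) :
    ArcAdj G (fun z => -f z) (fun i => -(b i)) (fun i => -(a i)) := by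
  intro u w
  rw [hA u w]
  constructor
  · rintro ⟨hne, i, hu, hw⟩
    exact ⟨hne, i, arc_neg.2 (by simpa using hu), arc_neg.2 (by simpa using hw)⟩
  · rintro ⟨hne, i, hu, hw⟩
    refine ⟨hne, i, ?_, ?_⟩
    · have := arc_neg.1 hu; simpa using this
    · have := arc_neg.1 hw; simpa using this

end Mirror

section Count
open SimpleGraph
variable {V : Type*} {k : ℕ} {G : SimpleGraph V} {f : V → AddCircle (1:ℝ)} {a b : Fin k → ℝ}

lemma clique_ncard [Fintype V] {X : Set V} {x0 : V} (hx0 : x0 ∉ X)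
    (hcl : G.IsClique (insert x0 X)) : X.ncard + 1 ≤ G.cliqueNum := by
  classical
  have hfin : X.Finite := X.toFinite
  have hfin' : (insert x0 X).Finite := hfin.insert x0
  have hco : (hfin'.toFinset : Set V) = insert x0 X := hfin'.coe_toFinset
  have hcl' : G.IsClique (hfin'.toFinset : Set V) := by rw [hco]; exact hcl
  have hle : hfin'.toFinset.card ≤ G.cliqueNum :=
    SimpleGraph.IsClique.card_le_cliqueNum (tc := hcl')
  have h1 : (insert x0 X).ncard = X.ncard + 1 := Set.ncard_insert_of_notMem hx0 hfin
  have h2 : (insert x0 X).ncard = hfin'.toFinset.card := Set.ncard_eq_toFinset_card _ hfin'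
  omega

lemma one_le_cliqueNum [Fintype V] (G : SimpleGraph V) (v : V) : 1 ≤ G.cliqueNum := by
  have hcl : G.IsClique (insert v (∅ : Set V)) := by
    intro x hx y hy hne
    rw [Set.insert_eq, Set.union_empty] at hx hy
    simp only [Set.mem_singleton_iff] at hx hy
    exact absurd (hx.trans hy.symm) hne
  simpa using clique_ncard (X := (∅ : Set V)) (by simp) hcl

lemma Rbound [Fintype V] (hlen : ∀ i, b i - a i < 1) (hf : Function.Injective f)
    (hA : ArcAdj G f a b) (v : V) : (Rset f a b v).ncard + 1 ≤ G.cliqueNum :=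
  clique_ncard (fun h => h.1 rfl) (Rclique hlen hf hA v)

lemma Sbound [Fintype V] (hlen : ∀ i, b i - a i < 1) (hf : Function.Injective f)
    (hA : ArcAdj G f a b) (v : V) : (Sset G f a b v).ncard + 1 ≤ G.cliqueNum := by
  classical
  rcases Set.eq_empty_or_nonempty (Sset G f a b v) with he | ⟨w0, hw0⟩
  · rw [he]
    simpa using one_le_cliqueNum G v
  · obtain ⟨hw0v, hw0n, x1, hx1v, hPvx1, _⟩ := hw0
    have hRfin : (Rset f a b v).Finite := Set.toFinite _
    have hRne : hRfin.toFinset.Nonempty := ⟨x1, hRfin.mem_toFinset.2 ⟨hx1v, hPvx1⟩⟩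
    obtain ⟨x0, hx0F, hmaxF⟩ := Finset.exists_max_image hRfin.toFinset (gO f v) hRne
    have hx0 : x0 ∈ Rset f a b v := hRfin.mem_toFinset.1 hx0F
    have hmax : ∀ x ∈ Rset f a b v, gO f v x ≤ gO f v x0 :=
      fun x hx => hmaxF x (hRfin.mem_toFinset.2 hx)
    have hx0n : x0 ∉ Sset G f a b v := by
      intro hc
      exact hc.2.1 (adj_of_plus hA hx0.2 (Ne.symm hx0.1))
    exact clique_ncard hx0n (Sclique hlen hf hA hx0 hmax)

end Count

section CoverFinal
open SimpleGraph
variable {V : Type*} {k : ℕ} {G : SimpleGraph V} {f : V → AddCircle (1:ℝ)} {a b : Fin k → ℝ}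

lemma cover (hlen : ∀ i, b i - a i < 1) (hA : ArcAdj G f a b) (v : V) :
    (square G).neighborSet v ⊆
      Rset f a b v ∪ Rset (fun z => -f z) (fun i => -(b i)) (fun i => -(a i)) v ∪
      Sset G f a b v ∪ Sset G (fun z => -f z) (fun i => -(b i)) (fun i => -(a i)) v := by
  intro u hu
  obtain ⟨hne, h2⟩ : v ≠ u ∧ (G.Adj v u ∨ ∃ x, G.Adj v x ∧ G.Adj x u) :=
    ((square G).mem_neighborSet v u).1 hu
  have hlen' : ∀ i, (fun i => -(a i)) i - (fun i => -(b i)) i < 1 := by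
    intro i; dsimp only; linarith [hlen i]
  have hA' := arcAdj_neg hA
  by_cases hvu : G.Adj v u
  · rcases plus_of_adj hA hvu with hP | hP
    · exact Or.inl (Or.inl (Or.inl ⟨hne.symm, hP⟩))
    · exact Or.inl (Or.inl (Or.inr ⟨hne.symm, plus_neg.2 hP⟩))
  · rcases h2 with h2 | ⟨x, hvx, hxu⟩
    · exact absurd h2 hvu
    · have hxv : x ≠ v := hvx.ne'
      rcases plus_of_adj hA hvx with hPvx | hPxv
      · rcases plus_of_adj hA hxu with hPxu | hPux
        · exact Or.inl (Or.inr ⟨hne.symm, hvu, x, hxv, hPvx, hPxu⟩)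
        · exact absurd (caseB hlen hA hPvx hPux hne.symm) hvu
      · rcases plus_of_adj hA hxu with hPxu | hPux
        · exact absurd (caseB hlen' hA' (plus_neg.2 hPxv) (plus_neg.2 hPxu) hne.symm) hvu
        · exact Or.inr ⟨hne.symm, hvu, x, hxv, plus_neg.2 hPxv, plus_neg.2 hPux⟩

end CoverFinal

theorem stmt_9 [Fintype V] (G : SimpleGraph V) (k : ℕ)
    (f : V → AddCircle (1 : ℝ)) (hf : Function.Injective f)
    (a b : Fin k → ℝ) (hab : ∀ i, a i ≤ b i) (hlen : ∀ i, b i - a i < 1)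
    (hadj : ∀ u w : V, G.Adj u w ↔ u ≠ w ∧ ∃ i : Fin k,
      f u ∈ (fun x : ℝ => (x : AddCircle (1 : ℝ))) '' Set.Icc (a i) (b i) ∧
      f w ∈ (fun x : ℝ => (x : AddCircle (1 : ℝ))) '' Set.Icc (a i) (b i)) :
    ∀ v : V, sqDeg G v ≤ 4 * G.cliqueNum - 4 := by
  intro v
  classical
  have hA : ArcAdj G f a b := by
    intro u w
    rw [hadj u w]
    simp only [Arc, Set.mem_image]
  have hf' : Function.Injective (fun z => -f z) := by
    intro u w h
    dsimp only at h
    exact hf (neg_injective h)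
  have hlen' : ∀ i, (fun i => -(a i)) i - (fun i => -(b i)) i < 1 := by
    intro i; dsimp only; linarith [hlen i]
  have hA' := arcAdj_neg hA
  have hR := Rbound hlen hf hA v
  have hR' := Rbound hlen' hf' hA' v
  have hS := Sbound hlen hf hA v
  have hS' := Sbound hlen' hf' hA' v
  have hone := one_le_cliqueNum G v
  have hcov := cover hlen hA v
  set A := Rset f a b v
  set B := Rset (fun z => -f z) (fun i => -(b i)) (fun i => -(a i)) v
  set C := Sset G f a b v
  set D := Sset G (fun z => -f z) (fun i => -(b i)) (fun i => -(a i)) v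
  have h1 : sqDeg G v ≤ (A ∪ B ∪ C ∪ D).ncard :=
    Set.ncard_le_ncard hcov (Set.toFinite _)
  have h2 : (A ∪ B ∪ C ∪ D).ncard ≤ A.ncard + B.ncard + C.ncard + D.ncard := by
    calc (A ∪ B ∪ C ∪ D).ncard ≤ (A ∪ B ∪ C).ncard + D.ncard := Set.ncard_union_le _ _
      _ ≤ (A ∪ B).ncard + C.ncard + D.ncard := by
          have := Set.ncard_union_le (A ∪ B) C; omega
      _ ≤ A.ncard + B.ncard + C.ncard + D.ncard := by
          have := Set.ncard_union_le A B; omega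
  omega
end

section
/- Let (G, a, b) be a linear interval strip. Then for any vertex v adjacent to a in G, the degree of v in the square of G satisfies deg_{G²}(v) ≤ 3ω(G) − 3. -/
open SimpleGraph Finset

variable {V : Type*}

lemma clique_ncard_le_cliqueNum [Fintype V] {G : SimpleGraph V} {s : Set V}
    (hs : G.IsClique s) : s.ncard ≤ G.cliqueNum := by
  have hfin := s.toFinite
  have h1 : G.IsClique (hfin.toFinset : Set V) := by rwa [Set.Finite.coe_toFinset]
  have := SimpleGraph.IsClique.card_le_cliqueNum (t := hfin.toFinset) (tc := h1)
  rwa [Set.ncard_eq_toFinset_card s hfin]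

theorem stmt_10 [Fintype V] (G : SimpleGraph V) (k : ℕ)
    (f : V → ℝ) (hf : Function.Injective f)
    (F : Fin k → Set ℝ) (a' b' : Fin k → ℝ) (hF : ∀ i, F i = Set.Icc (a' i) (b' i))
    (hadj : ∀ u w : V, G.Adj u w ↔ u ≠ w ∧ ∃ i : Fin k, f u ∈ F i ∧ f w ∈ F i)
    (va vb : V) (hmin : ∀ u : V, f va ≤ f u) (hmax : ∀ u : V, f u ≤ f vb) :
    ∀ v : V, G.Adj va v → sqDeg G v ≤ 3 * G.cliqueNum - 3 := by
  intro v hav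
  -- key "convexity" lemma: a point between two adjacent points is adjacent to both
  have key : ∀ u w x : V, G.Adj u w → f u ≤ f x → f x ≤ f w →
      (x ≠ u → G.Adj u x) ∧ (x ≠ w → G.Adj x w) := by
    intro u w x huw h1 h2
    obtain ⟨hne, i, hu, hw⟩ := (hadj u w).1 huw
    rw [hF i] at hu hw
    have hx : f x ∈ F i := by rw [hF i]; exact ⟨hu.1.trans h1, h2.trans hw.2⟩
    constructor
    · intro hne'
      exact (hadj u x).2 ⟨hne'.symm, i, by rw [hF i]; exact hu, hx⟩
    · intro hne'
      exact (hadj x w).2 ⟨hne', i, hx, by rw [hF i]; exact hw⟩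
  -- everything to the left of v is adjacent to v
  have hleft : ∀ u : V, u ≠ v → f u ≤ f v → G.Adj u v := by
    intro u hne hle
    exact (key va v u hav (hmin u) hle).2 hne
  -- interval witnessing va ~ v
  obtain ⟨-, i0, hva0, hv0⟩ := (hadj va v).1 hav
  -- the three sets
  set A : Set V := {u | u ≠ v ∧ f u ≤ f v} with hA
  set B : Set V := {u | G.Adj v u ∧ f v < f u} with hB
  set D : Set V := {u | u ≠ v ∧ ¬ G.Adj v u ∧ f v < f u ∧ ∃ x, G.Adj v x ∧ G.Adj x u}
    with hD
  -- coverage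
  have hcov : (square G).neighborSet v ⊆ A ∪ B ∪ D := by
    intro w hw
    obtain ⟨hne, hw2⟩ : v ≠ w ∧ (G.Adj v w ∨ ∃ x, G.Adj v x ∧ G.Adj x w) := hw
    rcases le_or_gt (f w) (f v) with h | h
    · exact Or.inl (Or.inl ⟨hne.symm, h⟩)
    · by_cases hvw : G.Adj v w
      · exact Or.inl (Or.inr ⟨hvw, h⟩)
      · rcases hw2 with h' | ⟨x, hx1, hx2⟩
        · exact absurd h' hvw
        · exact Or.inr ⟨hne.symm, hvw, h, x, hx1, hx2⟩
  -- A ∪ {v} is a clique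
  have hAmem : ∀ u ∈ insert v A, f u ∈ F i0 := by
    intro u hu
    rw [hF i0]
    rw [hF i0] at hva0 hv0
    rcases hu with rfl | hu
    · exact hv0
    · exact ⟨hva0.1.trans (hmin u), hu.2.trans hv0.2⟩
  have hAclique : G.IsClique (insert v A) := by
    intro x hx y hy hxy
    exact (hadj x y).2 ⟨hxy, i0, hAmem x hx, hAmem y hy⟩
  -- B ∪ {v} is a clique
  have hBclique : G.IsClique (insert v B) := by
    intro x hx y hy hxy
    rcases hx with rfl | hx
    · rcases hy with rfl | hy
      · exact absurd rfl hxy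
      · exact hy.1
    · rcases hy with rfl | hy
      · exact hx.1.symm
      · rcases le_or_gt (f x) (f y) with h | h
        · exact (key v y x hy.1 hx.2.le h).2 hxy
        · exact ((key v x y hx.1 hy.2.le h.le).2 (Ne.symm hxy)).symm
  -- bound on A
  have hvA : v ∉ A := fun h => h.1 rfl
  have hAcard : A.ncard + 1 ≤ G.cliqueNum := by
    have := clique_ncard_le_cliqueNum hAclique
    rwa [Set.ncard_insert_of_notMem hvA] at this
  have hvB : v ∉ B := fun h => h.1.ne rfl
  have hBcard : B.ncard + 1 ≤ G.cliqueNum := by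
    have := clique_ncard_le_cliqueNum hBclique
    rwa [Set.ncard_insert_of_notMem hvB] at this
  -- witnesses of second neighbours are to the right of v
  have hwit : ∀ u x : V, u ∈ D → G.Adj v x → G.Adj x u → f v < f x := by
    intro u x hu hvx hxu
    by_contra h
    push_neg at h
    exact hu.2.1 ((key x u v hxu h (hu.2.2.1).le).2 hu.1.symm)
  -- members of D strictly between v and a neighbour of v would be adjacent to v
  have hDnotbetween : ∀ u x : V, u ∈ D → G.Adj v x → f u ≤ f x → False := by
    intro u x hu hvx hle
    exact hu.2.1 ((key v x u hvx hu.2.2.1.le hle).1 hu.1)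
  -- bound on D
  have hDcard : D.ncard + 1 ≤ G.cliqueNum ∨ D = ∅ := by
    rcases D.eq_empty_or_nonempty with h | h
    · exact Or.inr h
    · left
      obtain ⟨w0, hw0, hmaxD⟩ := Set.exists_max_image D f D.toFinite h
      obtain ⟨x0, hvx0, hx0w0⟩ := hw0.2.2.2
      have hx0v : f v < f x0 := hwit w0 x0 hw0 hvx0 hx0w0
      have hx0D : x0 ∉ D := fun hc => hc.2.1 hvx0
      -- D ∪ {x0} is a clique
      have hDclique : G.IsClique (insert x0 D) := by
        intro p hp q hq hpq
        -- helper: x0 adjacent to every member of D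
        have hx0adj : ∀ u ∈ D, G.Adj x0 u := by
          intro u hu
          rcases le_or_gt (f x0) (f u) with h1 | h1
          · exact (key x0 w0 u hx0w0 h1 (hmaxD u hu)).1
              (fun hc => hu.2.1 (hc ▸ hvx0)) |>.symm.symm |>.symm.symm
              |>.symm.symm
          · exact absurd ((key v x0 u hvx0 hu.2.2.1.le h1.le).1 hu.1) (fun hc => hu.2.1 hc)
        rcases hp with rfl | hp
        · rcases hq with rfl | hq
          · exact absurd rfl hpq
          · exact hx0adj q hq
        · rcases hq with rfl | hq
          · exact (hx0adj p hp).symm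
          · -- both in D
            rcases le_or_gt (f p) (f q) with h1 | h1
            · obtain ⟨y, hvy, hyq⟩ := hq.2.2.2
              rcases le_or_gt (f y) (f p) with h2 | h2
              · exact (key y q p hyq h2 h1).2 hpq
              · exact absurd ((key v y p hvy hp.2.2.1.le h2.le).1 hp.1)
                  (fun hc => hp.2.1 hc)
            · obtain ⟨y, hvy, hyp⟩ := hp.2.2.2
              rcases le_or_gt (f y) (f q) with h2 | h2
              · exact ((key y p q hyp h2 h1.le).2 (Ne.symm hpq)).symm
              · exact absurd ((key v y q hvy hq.2.2.1.le h2.le).1 hq.1)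
                  (fun hc => hq.2.1 hc)
      have := clique_ncard_le_cliqueNum hDclique
      rwa [Set.ncard_insert_of_notMem hx0D] at this
  -- put everything together
  have hmain : sqDeg G v ≤ A.ncard + B.ncard + D.ncard := by
    calc sqDeg G v ≤ (A ∪ B ∪ D).ncard := Set.ncard_le_ncard hcov (Set.toFinite _)
    _ ≤ (A ∪ B).ncard + D.ncard := Set.ncard_union_le _ _
    _ ≤ A.ncard + B.ncard + D.ncard := by
        exact Nat.add_le_add_right (Set.ncard_union_le _ _) _
  rcases hDcard with hDc | hDc
  · omega
  · rw [hDc] at hmain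
    simp only [Set.ncard_empty] at hmain
    omega
end
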